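/- Let P ⊆ [0,1]^d be a finite nonempty set and P* ⊆ P a nonempty subset. Then max over q in the closed grid Γ̄(P) of δ(q,P*) equals max over q in Γ̄(P*) of δ(q,P*), where δ(q,S) := λ(q) − D(q,S)/|S|, λ(q) = ∏_j q_j, and Γ̄(S) := Γ̄^1(S) × ⋯ × Γ̄^d(S) with Γ̄^j(S) := {p_j : p ∈ S} ∪ {1}. -/

import Mathlib

open Finset
open scoped Classical

def unitCube (d : ℕ) : Set (Fin d → ℝ) := {q | ∀ j, 0 ≤ q j ∧ q j ≤ 1}

noncomputable def Dopen {d : ℕ} (q : Fin d → ℝ) (P : Finset (Fin d → ℝ)) : ℕ :=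
  (P.filter fun p => ∀ j, p j < q j).card

noncomputable def Dclosed {d : ℕ} (q : Fin d → ℝ) (P : Finset (Fin d → ℝ)) : ℕ :=
  (P.filter fun p => ∀ j, p j ≤ q j).card

def vol {d : ℕ} (q : Fin d → ℝ) : ℝ := ∏ j, q j
/-- The closed grid `Γ̄(S)`: all points whose `j`-th coordinate is a `j`-th
coordinate of a point of `S` or equals `1`. -/
def GammaBar {d : ℕ} (S : Finset (Fin d → ℝ)) : Set (Fin d → ℝ) :=
  {q | ∀ j, (∃ p ∈ S, p j = q j) ∨ q j = 1}

/-- Local discrepancy `δ(q,S) = λ(q) - D(q,S)/|S|`. -/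
noncomputable def deltaLo {d : ℕ} (q : Fin d → ℝ) (S : Finset (Fin d → ℝ)) : ℝ :=
  vol q - (Dopen q S : ℝ) / S.card

lemma gammaBar_finite {d : ℕ} (S : Finset (Fin d → ℝ)) : (GammaBar S).Finite := by
  have : GammaBar S ⊆ Set.pi Set.univ
      (fun j => ((fun p => p j) '' (S : Set (Fin d → ℝ))) ∪ {1}) := by
    intro q hq j _
    rcases hq j with ⟨p, hp, he⟩ | h
    · exact Or.inl ⟨p, by simpa using hp, he⟩
    · exact Or.inr h
  exact Set.Finite.subset (Set.Finite.pi fun j =>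
    (S.finite_toSet.image _).union (Set.finite_singleton 1)) this

lemma one_mem_gammaBar {d : ℕ} (S : Finset (Fin d → ℝ)) :
    (fun _ => (1:ℝ)) ∈ GammaBar S := fun j => Or.inr rfl

lemma gammaBar_mono {d : ℕ} {S T : Finset (Fin d → ℝ)} (h : S ⊆ T) :
    GammaBar S ⊆ GammaBar T := by
  intro q hq j
  rcases hq j with ⟨p, hp, he⟩ | h1
  · exact Or.inl ⟨p, h hp, he⟩
  · exact Or.inr h1

lemma coord_bounds {d : ℕ} {P : Finset (Fin d → ℝ)}
    (hP : ∀ p ∈ P, p ∈ unitCube d) {q : Fin d → ℝ} (hq : q ∈ GammaBar P) (j : Fin d) :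
    0 ≤ q j ∧ q j ≤ 1 := by
  rcases hq j with ⟨p, hp, he⟩ | h
  · exact he ▸ hP p hp j
  · simp [h]

lemma deltaLo_nonneg_one {d : ℕ} (S : Finset (Fin d → ℝ)) :
    0 ≤ deltaLo (fun _ => (1:ℝ)) S := by
  unfold deltaLo vol Dopen
  have h1 : (∏ _j : Fin d, (1:ℝ)) = 1 := by simp
  rw [h1]
  have hcard : ((S.filter fun p => ∀ j, p j < 1).card : ℝ) ≤ (S.card : ℝ) := by
    exact_mod_cast Finset.card_filter_le _ _
  rcases eq_or_ne (S.card : ℝ) 0 with h | h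
  · simp [h]
  · rw [sub_nonneg, div_le_one (lt_of_le_of_ne (by positivity) (Ne.symm h))]
    exact hcard

/-- key: pushing up to the Pstar grid -/
lemma push_up {d : ℕ} {P Pstar : Finset (Fin d → ℝ)}
    (hP : ∀ p ∈ P, p ∈ unitCube d) (hsub : Pstar ⊆ P) (hne : Pstar.Nonempty)
    {q : Fin d → ℝ} (hq : q ∈ GammaBar P) :
    ∃ q' ∈ GammaBar Pstar, deltaLo q Pstar ≤ deltaLo q' Pstar := by
  set F : Fin d → Finset ℝ := fun j => Pstar.image (fun p => p j) ∪ {1} with hF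
  set G : Fin d → Finset ℝ := fun j => (F j).filter (fun x => q j ≤ x) with hG
  have hGne : ∀ j, (G j).Nonempty := by
    intro j
    exact ⟨1, by simp [hG, hF, (coord_bounds hP hq j).2]⟩
  set q' : Fin d → ℝ := fun j => (G j).min' (hGne j) with hq'
  have hq'mem : ∀ j, q' j ∈ G j := fun j => Finset.min'_mem _ _
  have hle : ∀ j, q j ≤ q' j := by
    intro j
    have := hq'mem j
    rw [hG, Finset.mem_filter] at this
    exact this.2
  have hq'F : ∀ j, q' j ∈ F j := by
    intro j
    have := hq'mem j
    rw [hG, Finset.mem_filter] at this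
    exact this.1
  refine ⟨q', ?_, ?_⟩
  · intro j
    have := hq'F j
    rw [hF, Finset.mem_union, Finset.mem_image] at this
    rcases this with ⟨p, hp, he⟩ | h1
    · exact Or.inl ⟨p, hp, he⟩
    · exact Or.inr (by simpa using h1)
  · have hD : Dopen q Pstar = Dopen q' Pstar := by
      unfold Dopen
      congr 1
      apply Finset.filter_congr
      intro p hp
      constructor
      · intro h j
        exact lt_of_lt_of_le (h j) (hle j)
      · intro h j
        by_contra hc
        push_neg at hc
        have hpG : p j ∈ G j := by
          rw [hG, Finset.mem_filter]
          exact ⟨by rw [hF, Finset.mem_union, Finset.mem_image]; exact Or.inl ⟨p, hp, rfl⟩, hc⟩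
        exact absurd (h j) (not_lt.mpr (Finset.min'_le _ _ hpG))
    have hvol : vol q ≤ vol q' := by
      unfold vol
      apply Finset.prod_le_prod
      · intro j _; exact (coord_bounds hP hq j).1
      · intro j _; exact hle j
    unfold deltaLo
    rw [hD]
    linarith

theorem stmt3 {d : ℕ} (P Pstar : Finset (Fin d → ℝ))
    (hP : ∀ p ∈ P, p ∈ unitCube d) (hsub : Pstar ⊆ P)
    (hPne : P.Nonempty) (hne : Pstar.Nonempty) :
    (⨆ q ∈ GammaBar P, deltaLo q Pstar) = ⨆ q ∈ GammaBar Pstar, deltaLo q Pstar := by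
  have hPstarCube : ∀ p ∈ Pstar, p ∈ unitCube d := fun p hp => hP p (hsub hp)
  set f : (Fin d → ℝ) → ℝ := fun q => deltaLo q Pstar with hf
  have hfin : ∀ (S : Finset (Fin d → ℝ)), BddAbove (Set.range fun i : (GammaBar S) => f i) := by
    intro S
    apply Set.Finite.bddAbove
    have : (Set.range fun i : (GammaBar S) => f i) = f '' GammaBar S := by
      rw [← Set.image_eq_range]
    rw [this]
    exact (gammaBar_finite S).image f
  have hne1 : ∀ (S : Finset (Fin d → ℝ)), (GammaBar S).Nonempty :=
    fun S => ⟨_, one_mem_gammaBar S⟩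
  have hImBdd : ∀ (S : Finset (Fin d → ℝ)), BddAbove (f '' GammaBar S) := by
    intro S
    exact Set.Finite.bddAbove ((gammaBar_finite S).image f)
  have hsupnn : ∀ (S : Finset (Fin d → ℝ)), sSup (∅ : Set ℝ) ≤ ⨆ i : (GammaBar S), f i := by
    intro S
    rw [Real.sSup_empty]
    calc (0:ℝ) ≤ f (fun _ => 1) := deltaLo_nonneg_one Pstar
    _ ≤ _ := le_ciSup_set (hImBdd S) (one_mem_gammaBar S)
  rw [← csSup_image (hfin P) (hsupnn P), ← csSup_image (hfin Pstar) (hsupnn Pstar)]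
  apply le_antisymm
  · apply csSup_le ((hne1 P).image f)
    rintro a ⟨q, hq, rfl⟩
    obtain ⟨q', hq', hle⟩ := push_up hP hsub hne hq
    exact hle.trans (le_csSup (hImBdd Pstar) ⟨q', hq', rfl⟩)
  · exact csSup_le_csSup (hImBdd P) ((hne1 Pstar).image f)
      (Set.image_mono (gammaBar_mono hsub))
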